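/- Let N ≥ 2, κ ∈ ℝ with κ ≠ 0, and b₁, …, b_N ∈ ℝ with bₖ ≠ 1 for all k, and suppose that for every m ∈ {2, …, N} one has Σ_{i=1}^{m} bᵢ ≠ m·b_m. Define on (0,∞)^N × ℝ^N the functions 𝖧ₖ(q,p) = (1/2)·(pₖ² + qₖ² + bₖ/qₖ² − κ·qₖ·pₖ) for k = 1, …, N, and C^[m](q,p) = Σ_{1 ≤ i < j ≤ m} [(qᵢ·pⱼ − qⱼ·pᵢ)² + bᵢ·qⱼ²/qᵢ² + bⱼ·qᵢ²/qⱼ²] + Σ_{j=1}^{m} bⱼ for m = 2, …, N. Then the 2N−1 gradient vectors of these functions, evaluated at the point q = (1, …, 1), p = (0, …, 0), are linearly independent in ℝ^{2N}. -/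

import Mathlib

open Finset

/-- Partial derivative of `F(q,p)` with respect to `qₖ`. -/
noncomputable def pderivQ {N : ℕ} (F : (Fin N → ℝ) → (Fin N → ℝ) → ℝ) (k : Fin N)
    (q p : Fin N → ℝ) : ℝ :=
  deriv (fun x => F (Function.update q k x) p) (q k)

/-- Partial derivative of `F(q,p)` with respect to `pₖ`. -/
noncomputable def pderivP {N : ℕ} (F : (Fin N → ℝ) → (Fin N → ℝ) → ℝ) (k : Fin N)
    (q p : Fin N → ℝ) : ℝ :=
  deriv (fun x => F q (Function.update p k x)) (p k)

/-- The gradient of `F(q,p)` at `(q,p)`, as a vector in `ℝ^{2N}`. -/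
noncomputable def gradAt {N : ℕ} (F : (Fin N → ℝ) → (Fin N → ℝ) → ℝ)
    (q p : Fin N → ℝ) : (Fin N ⊕ Fin N) → ℝ :=
  Sum.elim (fun k => pderivQ F k q p) (fun k => pderivP F k q p)

/-- The `k`-th one degree of freedom invariant of the dSW system. -/
noncomputable def Hk {N : ℕ} (κ : ℝ) (b : Fin N → ℝ) (k : Fin N)
    (q p : Fin N → ℝ) : ℝ :=
  (1 / 2) * ((p k) ^ 2 + (q k) ^ 2 + b k / (q k) ^ 2 - κ * q k * p k)

/-- The left coalgebraic invariant `C^[m]`. -/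
noncomputable def Cleft {N : ℕ} (b : Fin N → ℝ) (m : ℕ)
    (q p : Fin N → ℝ) : ℝ :=
  (∑ t ∈ (Finset.univ : Finset (Fin N × Fin N)).filter
      (fun t => t.1 < t.2 ∧ t.2.val < m),
    ((q t.1 * p t.2 - q t.2 * p t.1) ^ 2
      + b t.1 * (q t.2) ^ 2 / (q t.1) ^ 2 + b t.2 * (q t.1) ^ 2 / (q t.2) ^ 2))
  + ∑ j ∈ Finset.univ.filter (fun j : Fin N => j.val < m), b j

lemma hasDerivAt_sq : HasDerivAt (fun x : ℝ => x ^ 2) 2 1 := by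
  simpa using hasDerivAt_pow 2 (1:ℝ)

lemma HgradP {N : ℕ} (κ : ℝ) (b : Fin N → ℝ) (a j : Fin N) :
    pderivP (Hk κ b a) j (fun _ => 1) (fun _ => 0) = if j = a then -(κ/2) else 0 := by
  unfold pderivP
  by_cases h : j = a
  · subst h
    have hfun : (fun x : ℝ => Hk κ b j (fun _ => 1) (Function.update (fun _ => (0:ℝ)) j x))
        = fun x : ℝ => 1/2 * (x^2 + 1 + b j - κ * x) := by
      funext x
      simp [Hk]
    rw [hfun, if_pos rfl]
    have h1 : HasDerivAt (fun x : ℝ => x^2 + 1 + b j - κ * x) (-κ) 0 := by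
      have := ((((hasDerivAt_pow 2 (0:ℝ)).add_const 1).add_const (b j)).fun_sub
        ((hasDerivAt_id (0:ℝ)).const_mul κ))
      simpa using this
    have h2 := h1.const_mul (1/2 : ℝ)
    have := h2.deriv
    simp only [show ((fun _ : Fin N => (0:ℝ)) j) = 0 from rfl]
    rw [this]; ring
  · have hfun : (fun x : ℝ => Hk κ b a (fun _ => 1) (Function.update (fun _ => (0:ℝ)) j x))
        = fun _ : ℝ => 1/2 * (0 + 1 + b a - 0) := by
      funext x
      simp [Hk, Function.update_of_ne (Ne.symm h)]
    rw [hfun, if_neg h]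
    simp

lemma HgradQ {N : ℕ} (κ : ℝ) (b : Fin N → ℝ) (a j : Fin N) :
    pderivQ (Hk κ b a) j (fun _ => 1) (fun _ => 0) = if j = a then 1 - b a else 0 := by
  unfold pderivQ
  by_cases h : j = a
  · subst h
    have hfun : (fun x : ℝ => Hk κ b j (Function.update (fun _ => (1:ℝ)) j x) (fun _ => 0))
        = fun x : ℝ => 1/2 * (x^2 + b j / x^2) := by
      funext x
      simp [Hk]
    rw [hfun, if_pos rfl]
    have h1 : HasDerivAt (fun x : ℝ => x^2 + b j / x^2)
        (2 + (0 * 1^2 - b j * 2)/((1^2)^2)) 1 :=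
      hasDerivAt_sq.add ((hasDerivAt_const 1 (b j)).div hasDerivAt_sq (by norm_num))
    have h2 := (h1.const_mul (1/2 : ℝ)).deriv
    simp only [show ((fun _ : Fin N => (1:ℝ)) j) = 1 from rfl]
    rw [h2]; ring
  · have hfun : (fun x : ℝ => Hk κ b a (Function.update (fun _ => (1:ℝ)) j x) (fun _ => 0))
        = fun _ : ℝ => 1/2 * (1 + b a) := by
      funext x
      simp [Hk, Function.update_of_ne (Ne.symm h)]
    rw [hfun]
    simp [h]

lemma CgradP {N : ℕ} (b : Fin N → ℝ) (m : ℕ) (k : Fin N) :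
    pderivP (Cleft b m) k (fun _ => 1) (fun _ => 0) = 0 := by
  unfold pderivP
  have key : HasDerivAt
      (fun x => Cleft b m (fun _ => 1) (Function.update (fun _ => (0:ℝ)) k x))
      (∑ _t ∈ (Finset.univ : Finset (Fin N × Fin N)).filter
        (fun t => t.1 < t.2 ∧ t.2.val < m), (0:ℝ)) 0 := by
    unfold Cleft
    apply HasDerivAt.add_const
    apply HasDerivAt.fun_sum
    intro t ht
    simp only [mem_filter, mem_univ, true_and] at ht
    obtain ⟨h12, h2m⟩ := ht
    have hne : t.1 ≠ t.2 := ne_of_lt h12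
    by_cases h1 : t.1 = k
    · have h2 : t.2 ≠ k := fun h => hne (h1.trans h.symm)
      have hd : HasDerivAt (fun x : ℝ => (0 - x)^2 + (b t.1 + b t.2)) 0 0 := by
        have h := (((hasDerivAt_id (0:ℝ)).const_sub 0).fun_pow 2).add_const (b t.1 + b t.2)
        simpa using h
      exact hd.congr_of_eventuallyEq (Filter.Eventually.of_forall fun x => by
        simp [Function.update_apply, h1, h2]; try ring)
    · by_cases h2 : t.2 = k
      · have hd : HasDerivAt (fun x : ℝ => (x - 0)^2 + (b t.1 + b t.2)) 0 0 := by
          have h := (((hasDerivAt_id (0:ℝ)).sub_const 0).fun_pow 2).add_const (b t.1 + b t.2)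
          simpa using h
        exact hd.congr_of_eventuallyEq (Filter.Eventually.of_forall fun x => by
          simp [Function.update_apply, h1, h2]; try ring)
      · have hd : HasDerivAt (fun _ : ℝ => (0:ℝ) + (b t.1 + b t.2)) 0 0 := hasDerivAt_const _ _
        exact hd.congr_of_eventuallyEq (Filter.Eventually.of_forall fun x => by
          simp [Function.update_apply, h1, h2]; try ring)
  have := key.deriv
  simp only [show ((fun _ : Fin N => (0:ℝ)) k) = 0 from rfl]
  rw [this]
  simp

lemma CgradQ_big {N : ℕ} (b : Fin N → ℝ) (m : ℕ) (k : Fin N) (h : m ≤ k.val) :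
    pderivQ (Cleft b m) k (fun _ => 1) (fun _ => 0) = 0 := by
  unfold pderivQ
  have hfun : (fun x => Cleft b m (Function.update (fun _ => (1:ℝ)) k x) (fun _ => 0))
      = fun _ : ℝ => Cleft b m (fun _ => 1) (fun _ => 0) := by
    funext x
    unfold Cleft
    congr 1
    apply Finset.sum_congr rfl
    intro t ht
    simp only [mem_filter, mem_univ, true_and] at ht
    obtain ⟨h12, h2m⟩ := ht
    have h2 : t.2 ≠ k := by
      intro he; rw [he] at h2m; omega
    have h1 : t.1 ≠ k := by
      intro he
      have := h12
      rw [he] at this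
      have : k.val < t.2.val := this
      omega
    rw [Function.update_of_ne h1, Function.update_of_ne h2]
  rw [hfun]
  simp

lemma CgradQ_last {N : ℕ} (b : Fin N → ℝ) (m : ℕ) (hm2 : 2 ≤ m) (hmN : m ≤ N)
    (k : Fin N) (hk : k.val = m - 1) :
    pderivQ (Cleft b m) k (fun _ => 1) (fun _ => 0)
      = 2 * ((∑ j ∈ Finset.univ.filter (fun j : Fin N => j.val < m), b j) - m * b k) := by
  unfold pderivQ
  have key : HasDerivAt
      (fun x => Cleft b m (Function.update (fun _ => (1:ℝ)) k x) (fun _ => 0))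
      (∑ t ∈ (Finset.univ : Finset (Fin N × Fin N)).filter
        (fun t => t.1 < t.2 ∧ t.2.val < m),
        (if t.2 = k then 2 * b t.1 - 2 * b k else 0)) 1 := by
    unfold Cleft
    apply HasDerivAt.add_const
    apply HasDerivAt.fun_sum
    intro t ht
    simp only [mem_filter, mem_univ, true_and] at ht
    obtain ⟨h12, h2m⟩ := ht
    by_cases h2 : t.2 = k
    · have h1 : t.1 ≠ k := by rw [← h2]; exact ne_of_lt h12
      rw [if_pos h2]
      have hd : HasDerivAt (fun x : ℝ => b t.1 * x^2 + b t.2 / x^2)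
          (2 * b t.1 - 2 * b k) 1 := by
        have hA : HasDerivAt (fun x : ℝ => b t.1 * x^2) (b t.1 * 2) 1 := by
          simpa using (hasDerivAt_pow 2 (1:ℝ)).const_mul (b t.1)
        have hB : HasDerivAt (fun x : ℝ => b t.2 / x^2) ((0 * 1^2 - b t.2 * 2)/((1^2)^2)) 1 :=
          (hasDerivAt_const 1 (b t.2)).div (by simpa using hasDerivAt_pow 2 (1:ℝ)) (by norm_num)
        have := hA.fun_add hB
        rw [h2] at *
        exact this.congr_deriv (by ring)
      exact hd.congr_of_eventuallyEq (Filter.Eventually.of_forall fun x => by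
        simp [Function.update_apply, h1, h2]; try ring)
    · have h2lt : t.2.val < k.val := by
        have : t.2.val ≠ k.val := fun h => h2 (Fin.ext h)
        omega
      have h1 : t.1 ≠ k := by
        intro he
        have : t.1.val < t.2.val := h12
        omega
      rw [if_neg h2]
      have hd : HasDerivAt (fun _ : ℝ => (0:ℝ) + (b t.1 + b t.2)) 0 1 := hasDerivAt_const _ _
      exact hd.congr_of_eventuallyEq (Filter.Eventually.of_forall fun x => by
        simp [Function.update_apply, h1, h2]; try ring)
  have hderiv := key.deriv
  simp only [show ((fun _ : Fin N => (1:ℝ)) k) = 1 from rfl]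
  rw [hderiv]
  -- now the combinatorial identity
  have hkm : k.val < m := by omega
  rw [Finset.sum_filter, Fintype.sum_prod_type]
  have hsummand : ∀ i j : Fin N,
      (if i < j ∧ j.val < m then (if j = k then 2 * b i - 2 * b k else 0) else 0)
      = if j = k then (if i < k then 2 * b i - 2 * b k else 0) else 0 := by
    intro i j
    by_cases hjk : j = k
    · subst hjk
      by_cases hik : i < j <;> simp [hik, hkm]
    · simp [hjk]
  simp_rw [hsummand]
  have hinner : ∀ i : Fin N, (∑ j : Fin N, if j = k then (if i < k then 2 * b i - 2 * b k else 0) else 0)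
      = (if i < k then 2 * b i - 2 * b k else 0) := by
    intro i
    rw [Finset.sum_ite_eq' Finset.univ k (fun _ => if i < k then 2 * b i - 2 * b k else 0)]
    simp
  simp_rw [hinner]
  rw [← Finset.sum_filter]
  have hsplit : Finset.univ.filter (fun j : Fin N => j.val < m)
      = insert k (Finset.univ.filter (fun i : Fin N => i < k)) := by
    ext i
    simp only [mem_filter, mem_univ, true_and, mem_insert, Fin.lt_def]
    constructor
    · intro h
      rcases eq_or_ne i k with h' | h'
      · exact Or.inl h'
      · right
        have : i.val ≠ k.val := fun hh => h' (Fin.ext hh)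
        omega
    · rintro (rfl | h)
      · exact hkm
      · omega
  rw [hsplit, Finset.sum_insert (by simp)]
  have hcard : (Finset.univ.filter (fun i : Fin N => i < k)).card = k.val := by
    rw [show (Finset.univ.filter (fun i : Fin N => i < k)) = Finset.Iio k from by
      ext i; simp]
    exact Fin.card_Iio k
  rw [Finset.sum_sub_distrib, ← Finset.mul_sum, Finset.sum_const, hcard, nsmul_eq_mul]
  have hcast : (k.val : ℝ) = (m : ℝ) - 1 := by
    rw [hk, Nat.cast_sub (by omega : 1 ≤ m)]
    norm_num
  rw [hcast]
  ring

theorem dSW_gradients_linearIndependent (N : ℕ) (hN : 2 ≤ N)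
    (κ : ℝ) (hκ : κ ≠ 0) (b : Fin N → ℝ) (hb : ∀ k, b k ≠ 1)
    (hbm : ∀ m : ℕ, (hm2 : 2 ≤ m) → (hmN : m ≤ N) →
      (∑ i ∈ Finset.univ.filter (fun i : Fin N => i.val < m), b i)
        ≠ (m : ℝ) * b ⟨m - 1, by omega⟩) :
    LinearIndependent ℝ (Sum.elim
      (fun k : Fin N => gradAt (Hk κ b k) (fun _ => 1) (fun _ => 0))
      (fun mm : Fin (N - 1) => gradAt (Cleft b (mm.val + 2)) (fun _ => 1) (fun _ => 0))) := by
  rw [Fintype.linearIndependent_iff]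
  intro g hg
  have heval : ∀ c : Fin N ⊕ Fin N,
      (∑ a : Fin N, g (Sum.inl a) * (gradAt (Hk κ b a) (fun _ => 1) (fun _ => 0)) c)
      + ∑ mm : Fin (N-1), g (Sum.inr mm)
          * (gradAt (Cleft b (mm.val+2)) (fun _ => 1) (fun _ => 0)) c = 0 := by
    intro c
    have h := congrFun hg c
    simpa [Fintype.sum_sum_type, Finset.sum_apply, Pi.smul_apply, smul_eq_mul] using h
  have hinl : ∀ a : Fin N, g (Sum.inl a) = 0 := by
    intro a
    have h := heval (Sum.inr a)
    simp only [gradAt, Sum.elim_inr] at h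
    simp only [HgradP, CgradP, mul_ite, mul_zero] at h
    rw [Finset.sum_ite_eq] at h
    simp only [Finset.mem_univ, if_pos, Finset.sum_const_zero, add_zero] at h
    rcases mul_eq_zero.mp h with h' | h'
    · exact h'
    · exfalso; apply hκ; linarith [h']
  have hq : ∀ kk : Fin N,
      (∑ mm : Fin (N-1), g (Sum.inr mm) * pderivQ (Cleft b (mm.val+2)) kk (fun _ => 1) (fun _ => 0)) = 0 := by
    intro kk
    have h := heval (Sum.inl kk)
    simp only [gradAt, Sum.elim_inl] at h
    rw [Finset.sum_eq_zero (fun a _ => by rw [hinl a, zero_mul])] at h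
    simpa using h
  have key : ∀ d : ℕ, ∀ mm : Fin (N-1), N - 1 - mm.val ≤ d → g (Sum.inr mm) = 0 := by
    intro d
    induction d with
    | zero =>
      intro mm h
      exact absurd h (by have := mm.isLt; omega)
    | succ d ih =>
      intro mm h
      have hlt : mm.val < N - 1 := mm.isLt
      set kk : Fin N := ⟨mm.val + 1, by omega⟩ with hkk
      have hsum := hq kk
      rw [Finset.sum_eq_single mm ?h0 ?h1] at hsum
      case h0 =>
        intro mm' _ hne
        rcases lt_trichotomy mm'.val mm.val with hc | hc | hc
        · rw [CgradQ_big b (mm'.val+2) kk (by simp [hkk]; omega), mul_zero]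
        · exact absurd (Fin.ext hc) hne
        · rw [ih mm' (by omega), zero_mul]
      case h1 =>
        intro hmem
        exact absurd (Finset.mem_univ mm) hmem
      rw [CgradQ_last b (mm.val+2) (by omega) (by omega) kk (by simp [hkk])] at hsum
      have hne : (2 : ℝ) * ((∑ j ∈ Finset.univ.filter (fun j : Fin N => j.val < mm.val+2), b j)
          - (mm.val+2 : ℕ) * b kk) ≠ 0 := by
        apply mul_ne_zero two_ne_zero
        apply sub_ne_zero.mpr
        have hb' := hbm (mm.val+2) (by omega) (by omega)
        have hfe : (⟨mm.val+2-1, by omega⟩ : Fin N) = kk := Fin.ext (by simp [hkk])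
        rw [hfe] at hb'
        exact fun hcon => hb' (by push_cast at hcon ⊢; linarith [hcon])
      rcases mul_eq_zero.mp hsum with h' | h'
      · exact h'
      · exact absurd h' (by push_cast at hne ⊢; exact hne)
  intro i
  cases i with
  | inl a => exact hinl a
  | inr mm => exact key N mm (by omega)
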